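/- Fix φ̃ > 0. For γ > 0 let P(γ) denote the unique P > 0 satisfying log(1+P·γ) = 1 + (φ̃·γ − 1)/(1+P·γ). Then the achieved rate log(1+P(γ)·γ) is strictly increasing in γ: if 0 < γ₁ < γ₂ then log(1+P(γ₁)·γ₁) < log(1+P(γ₂)·γ₂). Consequently, for any L > 0 the transmission duration L/log(1+P(γ)·γ) is strictly decreasing in γ. -/

import Mathlib

lemma aux_strictMonoOn : StrictMonoOn (fun x : ℝ => x * Real.log x - x) (Set.Ici 1) := by
  apply strictMonoOn_of_deriv_pos (convex_Ici 1)
  · exact (continuousOn_id.mul (Real.continuousOn_log.mono (by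
      intro x hx
      simp only [Set.mem_Ici] at hx
      simp only [Set.mem_compl_iff, Set.mem_singleton_iff]
      intro h; rw [h] at hx; linarith))).sub continuousOn_id
  · intro x hx
    rw [interior_Ici] at hx
    have hx0 : x ≠ 0 := by simp only [Set.mem_Ioi] at hx; linarith
    have h1 : HasDerivAt (fun x : ℝ => x * Real.log x - x) (Real.log x) x := by
      have : HasDerivAt (fun x : ℝ => x * Real.log x - x) (1 * Real.log x + x * x⁻¹ - 1) x := ((hasDerivAt_id x).mul (Real.hasDerivAt_log hx0)).sub (hasDerivAt_id x)
      convert this using 1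
      rw [mul_inv_cancel₀ hx0]; ring
    rw [h1.deriv]
    exact Real.log_pos hx

theorem lambert_rate_increasing_in_gain
    (φ : ℝ) (hφ : 0 < φ) (P : ℝ → ℝ)
    (hP_pos : ∀ γ : ℝ, 0 < γ → 0 < P γ)
    (hP_eq : ∀ γ : ℝ, 0 < γ →
      Real.log (1 + P γ * γ) = 1 + (φ * γ - 1) / (1 + P γ * γ))
    (hP_unique : ∀ γ : ℝ, 0 < γ → ∀ Q : ℝ, 0 < Q →
      Real.log (1 + Q * γ) = 1 + (φ * γ - 1) / (1 + Q * γ) → Q = P γ) :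
    (∀ γ₁ γ₂ : ℝ, 0 < γ₁ → γ₁ < γ₂ →
        Real.log (1 + P γ₁ * γ₁) < Real.log (1 + P γ₂ * γ₂)) ∧
      ∀ L : ℝ, 0 < L → ∀ γ₁ γ₂ : ℝ, 0 < γ₁ → γ₁ < γ₂ →
        L / Real.log (1 + P γ₂ * γ₂) < L / Real.log (1 + P γ₁ * γ₁) := by
  have key : ∀ γ : ℝ, 0 < γ →
      (1 + P γ * γ) * Real.log (1 + P γ * γ) - (1 + P γ * γ) = φ * γ - 1 := by
    intro γ hγ
    have hx : (0:ℝ) < 1 + P γ * γ := by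
      have := mul_pos (hP_pos γ hγ) hγ; linarith
    have := hP_eq γ hγ
    field_simp at this ⊢
    nlinarith [this]
  have main : ∀ γ₁ γ₂ : ℝ, 0 < γ₁ → γ₁ < γ₂ →
      Real.log (1 + P γ₁ * γ₁) < Real.log (1 + P γ₂ * γ₂) := by
    intro γ₁ γ₂ h1 h12
    have h2 : 0 < γ₂ := h1.trans h12
    have hx1 : (1:ℝ) < 1 + P γ₁ * γ₁ := by
      have := mul_pos (hP_pos γ₁ h1) h1; linarith
    have hx2 : (1:ℝ) < 1 + P γ₂ * γ₂ := by
      have := mul_pos (hP_pos γ₂ h2) h2; linarith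
    have hlt : 1 + P γ₁ * γ₁ < 1 + P γ₂ * γ₂ := by
      by_contra hle
      push_neg at hle
      have hmono := aux_strictMonoOn.monotoneOn
      have hval : (1 + P γ₂ * γ₂) * Real.log (1 + P γ₂ * γ₂) - (1 + P γ₂ * γ₂) ≤
          (1 + P γ₁ * γ₁) * Real.log (1 + P γ₁ * γ₁) - (1 + P γ₁ * γ₁) :=
        hmono (Set.mem_Ici.2 hx2.le) (Set.mem_Ici.2 hx1.le) hle
      rw [key γ₁ h1, key γ₂ h2] at hval
      nlinarith
    exact Real.log_lt_log (by linarith) hlt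
  refine ⟨main, ?_⟩
  intro L hL γ₁ γ₂ h1 h12
  have h2 : 0 < γ₂ := h1.trans h12
  have hl1 : 0 < Real.log (1 + P γ₁ * γ₁) := by
    apply Real.log_pos
    have := mul_pos (hP_pos γ₁ h1) h1; linarith
  exact div_lt_div_of_pos_left hL hl1 (main γ₁ γ₂ h1 h12)
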